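/- If b is even, then (T(a) + H(ta)Q₁)(T(b) + H(tb)Q₁) = T(ab) + H(t·ab)Q₁, where Q₁ = I − P₁ and P₁ is the projection onto the 0th coordinate of ℓ². -/

import Mathlib

set_option maxHeartbeats 1000000


/-- The product symbol: the Fourier coefficients of `a*b` are the convolution
of those of `a` and `b`. -/
noncomputable def conv (a b : ℤ → ℂ) : ℤ → ℂ := fun n => ∑' k : ℤ, a k * b (n - k)

/-- The Toeplitz matrix `(a_{j-k})_{j,k ≥ 0}` of a symbol given by its Fourier coefficients. -/
def Tmat (a : ℤ → ℂ) : ℕ → ℕ → ℂ := fun j k => a ((j : ℤ) - (k : ℤ))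

/-- The Hankel matrix `(a_{j+k+1})_{j,k ≥ 0}`. -/
def Hmat (a : ℤ → ℂ) : ℕ → ℕ → ℂ := fun j k => a ((j : ℤ) + (k : ℤ) + 1)

/-- The flip `ã(e^{iθ}) = a(e^{-iθ})`, on the level of Fourier coefficients. -/
def flip' (a : ℤ → ℂ) : ℤ → ℂ := fun n => a (-n)

/-- Product of infinite matrices (entrywise, via absolutely convergent series). -/
noncomputable def mulM (A B : ℕ → ℕ → ℂ) : ℕ → ℕ → ℂ := fun j k => ∑' i : ℕ, A j i * B i k

/-- The matrix of `T(a) + H(t a) Q₁`, where `H(ta) = (a_{j+k})` and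
`Q₁ = I - P₁` kills the 0th column. -/
def MIV (a : ℤ → ℂ) : ℕ → ℕ → ℂ :=
  fun j k => Tmat a j k + (if k = 0 then 0 else a ((j : ℤ) + (k : ℤ)))

/-- For even `b`: `(T(a)+H(ta)Q₁)(T(b)+H(tb)Q₁) = T(ab)+H(t·ab)Q₁`. -/
theorem M_IV_multiplicative (a b : ℤ → ℂ)
    (ha : Summable fun n => ‖a n‖) (hb : Summable fun n => ‖b n‖)
    (hbe : ∀ n : ℤ, b (-n) = b n) :
    ∀ j k : ℕ, mulM (MIV a) (MIV b) j k = MIV (conv a b) j k := by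
  intro j k
  have hbd : ∀ m : ℤ, ‖b m‖ ≤ ∑' m, ‖b m‖ := fun m => hb.le_tsum m fun _ _ => norm_nonneg _
  -- generic summability of products
  have key : ∀ (g h : ℕ → ℤ), Function.Injective g →
      Summable fun n : ℕ => ‖a (g n) * b (h n)‖ := by
    intro g h hg
    have h1 : Summable fun n : ℕ => ‖a (g n)‖ * ∑' m, ‖b m‖ := (ha.comp_injective hg).mul_right _
    refine h1.of_nonneg_of_le (fun n => norm_nonneg _) (fun n => ?_)
    rw [norm_mul]
    exact mul_le_mul_of_nonneg_left (hbd _) (norm_nonneg _)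
  have hinj1 : Function.Injective (fun i : ℕ => (j : ℤ) - i) := by intro x y h; dsimp only at h; omega
  have hinj2 : Function.Injective (fun i : ℕ => (j : ℤ) + i) := by intro x y h; dsimp only at h; omega
  have hinj3 : Function.Injective (fun i : ℕ => (j : ℤ) - -((i : ℤ) + 1)) := by intro x y h; dsimp only at h; omega
  -- splitting of the convolution
  have conv_split : ∀ n : ℤ, conv a b n
      = (∑' i : ℕ, a ((j : ℤ) - i) * b (n - ((j : ℤ) - i)))
        + ∑' i : ℕ, a ((j : ℤ) + i + 1) * b (n - ((j : ℤ) + i + 1)) := by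
    intro n
    have h1 : Summable fun i : ℕ => a ((j : ℤ) - i) * b (n - ((j : ℤ) - i)) :=
      (key _ _ hinj1).of_norm
    have h2 : Summable fun i : ℕ => a ((j : ℤ) - -((i : ℤ) + 1)) * b (n - ((j : ℤ) - -((i : ℤ) + 1))) :=
      (key _ _ hinj3).of_norm
    have e := Equiv.tsum_eq (Equiv.subLeft (j : ℤ)) (fun m => a m * b (n - m))
    simp only [Equiv.subLeft_apply] at e
    rw [conv, ← e, tsum_of_nat_of_neg_add_one h1 h2]
    congr 1
    all_goals try exact tsum_congr fun i => by rw [show (j : ℤ) - -((i : ℤ) + 1) = (j : ℤ) + i + 1 by ring]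
  -- summability of the Hankel-type pieces
  have hchi : ∀ h : ℕ → ℤ,
      Summable fun i : ℕ => (if i = 0 then 0 else a ((j : ℤ) + i)) * b (h i) := by
    intro h
    refine Summable.of_norm_bounded (key (fun i => (j : ℤ) + i) h hinj2) fun i => ?_
    by_cases hi : i = 0 <;> simp [hi] <;> positivity
  have hchi2 : ∀ h₁ h₂ : ℕ → ℤ,
      Summable fun i : ℕ =>
        (if i = 0 then 0 else a ((j : ℤ) + i)) * (b (h₁ i) + b (h₂ i)) := by
    intro h₁ h₂
    exact ((hchi h₁).add (hchi h₂)).congr fun i => by ring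
  by_cases hk : k = 0
  · subst hk
    simp only [mulM, MIV, Tmat, conv_split, Nat.cast_zero, sub_zero, add_zero, reduceIte]
    have hA : Summable fun i : ℕ => a ((j : ℤ) - i) * b (i : ℤ) :=
      (key _ (fun i : ℕ => (i : ℤ)) hinj1).of_norm
    have hB := hchi fun i : ℕ => (i : ℤ)
    rw [show (fun i : ℕ => (a ((j : ℤ) - i) + if i = 0 then 0 else a ((j : ℤ) + i)) * b (i : ℤ))
        = fun i : ℕ => a ((j : ℤ) - i) * b (i : ℤ)
          + (if i = 0 then 0 else a ((j : ℤ) + i)) * b (i : ℤ) from funext fun i => by ring]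
    rw [Summable.tsum_add hA hB, Summable.tsum_eq_zero_add hB]
    simp only [reduceIte, zero_mul, zero_add, if_neg (Nat.succ_ne_zero _)]
    congr 1
    · exact tsum_congr fun i => by rw [show (j : ℤ) - ((j : ℤ) - i) = (i : ℤ) by ring]
    · refine tsum_congr fun i => ?_
      have h1 : ((j : ℤ)) - ((j : ℤ) + i + 1) = -(((i : ℤ) + 1)) := by ring
      rw [h1, hbe]
      push_cast
      ring_nf
  · simp only [mulM, MIV, Tmat, conv_split, if_neg hk]
    have hT1 : Summable fun i : ℕ => a ((j : ℤ) - i) * b ((i : ℤ) - k) := (key _ _ hinj1).of_norm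
    have hT2 : Summable fun i : ℕ => a ((j : ℤ) - i) * b ((i : ℤ) + k) := (key _ _ hinj1).of_norm
    have hX := hchi2 (fun i : ℕ => (i : ℤ) - k) (fun i : ℕ => (i : ℤ) + k)
    rw [show (fun i : ℕ => (a ((j : ℤ) - i) + if i = 0 then 0 else a ((j : ℤ) + i))
          * (b ((i : ℤ) - k) + b ((i : ℤ) + k)))
        = fun i : ℕ => a ((j : ℤ) - i) * b ((i : ℤ) - k)
          + (a ((j : ℤ) - i) * b ((i : ℤ) + k)
            + (if i = 0 then 0 else a ((j : ℤ) + i)) * (b ((i : ℤ) - k) + b ((i : ℤ) + k)))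
        from funext fun i => by ring]
    rw [Summable.tsum_add hT1 (hT2.add hX), Summable.tsum_add hT2 hX, Summable.tsum_eq_zero_add hX]
    simp only [reduceIte, zero_mul, zero_add, add_zero, if_neg (Nat.succ_ne_zero _)]
    have e1 : (∑' i : ℕ, a ((j : ℤ) - i) * b ((j : ℤ) - k - ((j : ℤ) - i)))
        = ∑' i : ℕ, a ((j : ℤ) - i) * b ((i : ℤ) - k) :=
      tsum_congr fun i => by rw [show (j : ℤ) - k - ((j : ℤ) - i) = (i : ℤ) - k by ring]
    have e2 : (∑' i : ℕ, a ((j : ℤ) - i) * b ((j : ℤ) + k - ((j : ℤ) - i)))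
        = ∑' i : ℕ, a ((j : ℤ) - i) * b ((i : ℤ) + k) :=
      tsum_congr fun i => by rw [show (j : ℤ) + k - ((j : ℤ) - i) = (i : ℤ) + k by ring]
    have e3 : (∑' i : ℕ, a ((j : ℤ) + i + 1) * b ((j : ℤ) - k - ((j : ℤ) + i + 1)))
        = ∑' i : ℕ, a ((j : ℤ) + i + 1) * b (((i : ℤ) + 1) + k) := by
      refine tsum_congr fun i => ?_
      rw [show (j : ℤ) - k - ((j : ℤ) + i + 1) = -(((i : ℤ) + 1) + k) by ring, hbe]
    have e4 : (∑' i : ℕ, a ((j : ℤ) + i + 1) * b ((j : ℤ) + k - ((j : ℤ) + i + 1)))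
        = ∑' i : ℕ, a ((j : ℤ) + i + 1) * b (((i : ℤ) + 1) - k) := by
      refine tsum_congr fun i => ?_
      rw [show (j : ℤ) + k - ((j : ℤ) + i + 1) = -(((i : ℤ) + 1) - k) by ring, hbe]
    rw [e1, e2, e3, e4]
    have hU3 : Summable fun i : ℕ => a ((j : ℤ) + (i + 1 : ℕ)) * b (((i + 1 : ℕ) : ℤ) - k) :=
      (key (fun i : ℕ => (j : ℤ) + (i + 1 : ℕ)) _ (by intro x y h; dsimp only at h; omega)).of_norm
    have hU4 : Summable fun i : ℕ => a ((j : ℤ) + (i + 1 : ℕ)) * b (((i + 1 : ℕ) : ℤ) + k) :=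
      (key (fun i : ℕ => (j : ℤ) + (i + 1 : ℕ)) _ (by intro x y h; dsimp only at h; omega)).of_norm
    rw [show (fun i : ℕ => a ((j : ℤ) + (i + 1 : ℕ)) * (b (((i + 1 : ℕ) : ℤ) - k) + b (((i + 1 : ℕ) : ℤ) + k)))
        = fun i : ℕ => a ((j : ℤ) + (i + 1 : ℕ)) * b (((i + 1 : ℕ) : ℤ) - k)
          + a ((j : ℤ) + (i + 1 : ℕ)) * b (((i + 1 : ℕ) : ℤ) + k) from funext fun i => by ring]
    rw [Summable.tsum_add hU3 hU4]
    have e5 : (∑' i : ℕ, a ((j : ℤ) + (i + 1 : ℕ)) * b (((i + 1 : ℕ) : ℤ) - k))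
        = ∑' i : ℕ, a ((j : ℤ) + i + 1) * b (((i : ℤ) + 1) - k) :=
      tsum_congr fun i => by push_cast; ring_nf
    have e6 : (∑' i : ℕ, a ((j : ℤ) + (i + 1 : ℕ)) * b (((i + 1 : ℕ) : ℤ) + k))
        = ∑' i : ℕ, a ((j : ℤ) + i + 1) * b (((i : ℤ) + 1) + k) :=
      tsum_congr fun i => by push_cast; ring_nf
    rw [e5, e6]
    ring
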